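/- Fix p ∈ ℕ and let u, v ∈ ℕ^{<p} be finite sequences of naturals of length < p. Say u is above v if u_p >_lex v_p in the lexicographic order on (ω+1)^p, where u_p is u padded with ω's to length p. Then if u is above v, γ_p(u) > γ_p(v), where γ_p(u) = ⊕_{i<p} ω^{p-1-i}·(2·u_p(i)) (natural sum). -/

import Mathlib

open Ordinal

/-- Natural (Hessenberg) addition of ordinals, as formerly defined in Mathlib
(`Mathlib.SetTheory.Ordinal.NaturalOps`, removed since). -/
noncomputable def Ordinal.nadd (a b : Ordinal.{u}) : Ordinal.{u} :=
  max (⨆ x : Set.Iio a, Order.succ (Ordinal.nadd x.1 b))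
    (⨆ x : Set.Iio b, Order.succ (Ordinal.nadd a x.1))
termination_by (a, b)
decreasing_by all_goals cases x; decreasing_tactic

infixl:65 " ♯ " => Ordinal.nadd

/-- The `i`-th entry of the sequence `u` padded on the right with copies of `ω`
to length `p` (entries lie in `ω + 1`). -/
noncomputable def pad (u : List ℕ) (i : ℕ) : Ordinal.{0} :=
  if h : i < u.length then (u.get ⟨i, h⟩ : Ordinal) else omega0

/-- The natural (Hessenberg) sum `⊕_{i=j}^{p-1} ω^{p-1-i} · (2 · u_p(i))`. -/
noncomputable def gammaFrom (p j : ℕ) (u : List ℕ) : Ordinal :=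
  ((List.range (p - j)).map fun k =>
    (omega0 : Ordinal) ^ (p - 1 - (j + k)) * (2 * pad u (j + k))).foldr (· ♯ ·) 0

/-- `γ_p(u) = ⊕_{i<p} ω^{p-1-i} · (2 · u_p(i))`. -/
noncomputable def gammaP (p : ℕ) (u : List ℕ) : Ordinal := gammaFrom p 0 u

/-- `u` is above `v`: the `ω`-padded sequence `u_p` is lexicographically
strictly greater than `v_p` in `(ω+1)^p`. -/
def Above (p : ℕ) (u v : List ℕ) : Prop :=
  ∃ j < p, (∀ i < j, pad u i = pad v i) ∧ pad v j < pad u j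

namespace NaddAux

theorem lt_nadd_iff {a b c : Ordinal.{u}} :
    a < b ♯ c ↔ (∃ b' < b, a ≤ b' ♯ c) ∨ ∃ c' < c, a ≤ b ♯ c' := by
  rw [Ordinal.nadd]
  simp only [lt_max_iff, Ordinal.lt_iSup_iff, Order.lt_succ_iff, Subtype.exists, Set.mem_Iio,
    exists_prop]

theorem nadd_le_iff {a b c : Ordinal.{u}} :
    b ♯ c ≤ a ↔ (∀ b' < b, b' ♯ c < a) ∧ ∀ c' < c, b ♯ c' < a := by
  rw [← not_lt, lt_nadd_iff]
  simp only [not_or, not_exists, not_and, not_le]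

theorem nadd_lt_nadd_left {b c : Ordinal.{u}} (h : b < c) (a : Ordinal.{u}) : a ♯ b < a ♯ c :=
  lt_nadd_iff.2 (Or.inr ⟨b, h, le_rfl⟩)

theorem nadd_lt_nadd_right {b c : Ordinal.{u}} (h : b < c) (a : Ordinal.{u}) : b ♯ a < c ♯ a :=
  lt_nadd_iff.2 (Or.inl ⟨b, h, le_rfl⟩)

theorem nadd_le_nadd_left {b c : Ordinal.{u}} (h : b ≤ c) (a : Ordinal.{u}) : a ♯ b ≤ a ♯ c := by
  rcases h.lt_or_eq with h | rfl
  · exact (nadd_lt_nadd_left h a).le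
  · exact le_rfl

theorem nadd_le_nadd_right {b c : Ordinal.{u}} (h : b ≤ c) (a : Ordinal.{u}) : b ♯ a ≤ c ♯ a := by
  rcases h.lt_or_eq with h | rfl
  · exact (nadd_lt_nadd_right h a).le
  · exact le_rfl

@[simp]
theorem nadd_zero (a : Ordinal.{u}) : a ♯ 0 = a := by
  induction a using Ordinal.induction with
  | h a IH =>
    apply le_antisymm
    · rw [nadd_le_iff]
      refine ⟨fun b hb => ?_, fun c hc => absurd hc (not_lt_of_ge (zero_le : (0 : Ordinal.{u}) ≤ c))⟩
      rw [IH b hb]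
      exact hb
    · refine le_of_forall_lt (fun c hc => ?_)
      exact lt_nadd_iff.2 (Or.inl ⟨c, hc, (IH c hc).ge⟩)

theorem le_self_nadd {a b : Ordinal.{u}} : a ≤ a ♯ b := by
  have := nadd_le_nadd_left (zero_le : (0 : Ordinal.{u}) ≤ b) a
  rwa [nadd_zero] at this

theorem add_le_nadd (a b : Ordinal.{u}) : a + b ≤ a ♯ b := by
  induction b using Ordinal.induction with
  | h b IH =>
    refine le_of_forall_lt (fun x hx => ?_)
    rcases lt_or_ge x a with hxa | hxa
    · exact hxa.trans_le le_self_nadd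
    · have hx' := Ordinal.add_sub_cancel_of_le hxa
      rw [← hx'] at hx
      have ht : x - a < b := (add_lt_add_iff_left a).mp hx
      calc x = a + (x - a) := hx'.symm
        _ ≤ a ♯ (x - a) := IH _ ht
        _ < a ♯ b := nadd_lt_nadd_left ht a

theorem nadd_lt_nadd_of_le_of_lt {a b c d : Ordinal.{u}} (h₁ : a ≤ b) (h₂ : c < d) :
    a ♯ c < b ♯ d :=
  (nadd_le_nadd_right h₁ c).trans_lt (nadd_lt_nadd_left h₂ b)

end NaddAux

open NaddAux

namespace StmtAux

private lemma le_of_forall_lt' {a b : Ordinal.{0}} (H : ∀ c, c < a → c < b) : a ≤ b := by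
  by_contra hcon
  exact absurd (H b (not_le.mp hcon)) (lt_irrefl b)

private lemma pow_ne_zero' (n : ℕ) : ((omega0 : Ordinal.{0}) ^ n) ≠ 0 :=
  pow_ne_zero n omega0_ne_zero

/-- Decomposition of an ordinal below `ω^n·m + r` (with `r < ω^n`) into
`ω^n·m' + r'` with `m' < m`, or `m' = m` and `r' < r`. -/
private lemma mul_natSucc (x : Ordinal.{0}) (a : ℕ) :
    x * ((a : ℕ) : Ordinal.{0}) + x = x * ((a + 1 : ℕ) : Ordinal.{0}) := by
  push_cast
  rw [mul_add, mul_one]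

private lemma decomp (n m : ℕ) {a r : Ordinal.{0}} (hr : r < (omega0 : Ordinal.{0}) ^ n)
    (ha : a < (omega0 : Ordinal.{0}) ^ n * m + r) :
    ∃ (m' : ℕ) (r' : Ordinal.{0}), r' < (omega0 : Ordinal.{0}) ^ n ∧
      a = (omega0 : Ordinal.{0}) ^ n * m' + r' ∧ (m' < m ∨ (m' = m ∧ r' < r)) := by
  have hne := pow_ne_zero' n
  have hq : a / (omega0 : Ordinal.{0}) ^ n < ((m + 1 : ℕ) : Ordinal.{0}) := by
    rw [Ordinal.div_lt hne]
    calc a < (omega0 : Ordinal.{0}) ^ n * m + r := ha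
      _ < (omega0 : Ordinal.{0}) ^ n * m + (omega0 : Ordinal.{0}) ^ n := add_lt_add_right hr _
      _ = (omega0 : Ordinal.{0}) ^ n * ((m + 1 : ℕ) : Ordinal.{0}) := mul_natSucc _ m
  obtain ⟨m', hm'⟩ := lt_omega0.mp (hq.trans (nat_lt_omega0 _))
  have hm'm : m' < m + 1 := by exact_mod_cast hm' ▸ hq
  have hmod := Ordinal.mod_lt a hne
  have hdm : (omega0 : Ordinal.{0}) ^ n * m' + a % (omega0 : Ordinal.{0}) ^ n = a := by
    rw [← hm']; exact Ordinal.div_add_mod a _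
  rcases Nat.lt_succ_iff_lt_or_eq.mp hm'm with hlt | rfl
  · exact ⟨m', _, hmod, hdm.symm, Or.inl hlt⟩
  · refine ⟨m', _, hmod, hdm.symm, Or.inr ⟨rfl, ?_⟩⟩
    have := ha
    rw [← hdm] at this
    exact (add_lt_add_iff_left _).mp this

/-- The key evaluation lemma for natural addition of normal forms, assuming
indecomposability of `ω^n` under natural addition. -/
private lemma key_aux (n : ℕ)
    (T : ∀ a b : Ordinal.{0}, a < (omega0 : Ordinal.{0}) ^ n → b < (omega0 : Ordinal.{0}) ^ n →
      a ♯ b < (omega0 : Ordinal.{0}) ^ n) :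
    ∀ (N m k : ℕ) (r s : Ordinal.{0}), m + k ≤ N →
      r < (omega0 : Ordinal.{0}) ^ n → s < (omega0 : Ordinal.{0}) ^ n →
      ((omega0 : Ordinal.{0}) ^ n * m + r) ♯ ((omega0 : Ordinal.{0}) ^ n * k + s) =
        (omega0 : Ordinal.{0}) ^ n * ((m + k : ℕ) : Ordinal.{0}) + (r ♯ s) := by
  intro N
  induction N with
  | zero =>
    intro m k r s hN hr hs
    obtain ⟨rfl, rfl⟩ : m = 0 ∧ k = 0 := by omega
    simp
  | succ N ihN =>
    intro m k r s hN hr hs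
    have inner : ∀ c : Ordinal.{0}, ∀ r s : Ordinal.{0},
        r < (omega0 : Ordinal.{0}) ^ n → s < (omega0 : Ordinal.{0}) ^ n → r ♯ s ≤ c →
        ((omega0 : Ordinal.{0}) ^ n * m + r) ♯ ((omega0 : Ordinal.{0}) ^ n * k + s) =
          (omega0 : Ordinal.{0}) ^ n * ((m + k : ℕ) : Ordinal.{0}) + (r ♯ s) := by
      intro c
      induction c using Ordinal.induction with
      | h c ihc =>
        intro r s hr hs hc
        apply le_antisymm
        · rw [nadd_le_iff]
          constructor
          · -- first component: a' < ω^n*m + r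
            intro a' ha'
            obtain ⟨m', r', hr', rfl, hcase⟩ := decomp n m hr ha'
            rcases hcase with hm'm | ⟨rfl, hr'r⟩
            · have heq := ihN m' k r' s (by omega) hr' hs
              rw [heq]
              calc (omega0 : Ordinal.{0}) ^ n * ((m' + k : ℕ) : Ordinal.{0}) + (r' ♯ s)
                  < (omega0 : Ordinal.{0}) ^ n * ((m' + k : ℕ) : Ordinal.{0}) + (omega0 : Ordinal.{0}) ^ n :=
                    add_lt_add_right (T r' s hr' hs) _
                _ = (omega0 : Ordinal.{0}) ^ n * ((m' + k + 1 : ℕ) : Ordinal.{0}) := mul_natSucc _ _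
                _ ≤ (omega0 : Ordinal.{0}) ^ n * ((m + k : ℕ) : Ordinal.{0}) :=
                    mul_le_mul_right (Nat.cast_le.mpr (by omega)) _
                _ ≤ _ := le_self_add
            · have heq := ihc (r' ♯ s) (lt_of_lt_of_le (nadd_lt_nadd_right hr'r s) hc)
                r' s hr' hs le_rfl
              rw [heq]
              exact add_lt_add_right (nadd_lt_nadd_right hr'r s) _
          · -- second component: c' < ω^n*k + s
            intro b' hb'
            obtain ⟨k', s', hs', rfl, hcase⟩ := decomp n k hs hb'
            rcases hcase with hk'k | ⟨rfl, hs's⟩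
            · have heq := ihN m k' r s' (by omega) hr hs'
              rw [heq]
              calc (omega0 : Ordinal.{0}) ^ n * ((m + k' : ℕ) : Ordinal.{0}) + (r ♯ s')
                  < (omega0 : Ordinal.{0}) ^ n * ((m + k' : ℕ) : Ordinal.{0}) + (omega0 : Ordinal.{0}) ^ n :=
                    add_lt_add_right (T r s' hr hs') _
                _ = (omega0 : Ordinal.{0}) ^ n * ((m + k' + 1 : ℕ) : Ordinal.{0}) := mul_natSucc _ _
                _ ≤ (omega0 : Ordinal.{0}) ^ n * ((m + k : ℕ) : Ordinal.{0}) :=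
                    mul_le_mul_right (Nat.cast_le.mpr (by omega)) _
                _ ≤ _ := le_self_add
            · have heq := ihc (r ♯ s') (lt_of_lt_of_le (nadd_lt_nadd_left hs's r) hc)
                r s' hr hs' le_rfl
              rw [heq]
              exact add_lt_add_right (nadd_lt_nadd_left hs's r) _
        · apply le_of_forall_lt'
          intro x hx
          rcases lt_or_ge x ((omega0 : Ordinal.{0}) ^ n * ((m + k : ℕ) : Ordinal.{0})) with hx1 | hx1
          · have hbig : (omega0 : Ordinal.{0}) ^ n * ((m + k : ℕ) : Ordinal.{0}) ≤
                ((omega0 : Ordinal.{0}) ^ n * m + r) + ((omega0 : Ordinal.{0}) ^ n * k + s) := by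
              rw [add_assoc]
              push_cast
              rw [mul_add]
              refine add_le_add_right ?_ _
              exact le_trans (le_self_add : _ ≤ _ + s) le_add_self
            exact lt_of_lt_of_le (hx1.trans_le hbig) (add_le_nadd _ _)
          · have hxt : x = (omega0 : Ordinal.{0}) ^ n * ((m + k : ℕ) : Ordinal.{0}) +
                (x - (omega0 : Ordinal.{0}) ^ n * ((m + k : ℕ) : Ordinal.{0})) :=
              (Ordinal.add_sub_cancel_of_le hx1).symm
            set t := x - (omega0 : Ordinal.{0}) ^ n * ((m + k : ℕ) : Ordinal.{0}) with ht_def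
            have ht : t < r ♯ s := by
              have h2 := hx
              rw [hxt] at h2
              exact (add_lt_add_iff_left _).mp h2
            rcases lt_nadd_iff.mp ht with ⟨r', hr', htr⟩ | ⟨s', hs', hts⟩
            · have heq := ihc (r' ♯ s) (lt_of_lt_of_le (nadd_lt_nadd_right hr' s) hc)
                r' s (hr'.trans hr) hs le_rfl
              calc x = (omega0 : Ordinal.{0}) ^ n * ((m + k : ℕ) : Ordinal.{0}) + t := hxt
                _ ≤ (omega0 : Ordinal.{0}) ^ n * ((m + k : ℕ) : Ordinal.{0}) + (r' ♯ s) :=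
                    add_le_add_right htr _
                _ = ((omega0 : Ordinal.{0}) ^ n * m + r') ♯ ((omega0 : Ordinal.{0}) ^ n * k + s) :=
                    heq.symm
                _ < _ := nadd_lt_nadd_right (add_lt_add_right hr' _) _
            · have heq := ihc (r ♯ s') (lt_of_lt_of_le (nadd_lt_nadd_left hs' r) hc)
                r s' hr (hs'.trans hs) le_rfl
              calc x = (omega0 : Ordinal.{0}) ^ n * ((m + k : ℕ) : Ordinal.{0}) + t := hxt
                _ ≤ (omega0 : Ordinal.{0}) ^ n * ((m + k : ℕ) : Ordinal.{0}) + (r ♯ s') :=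
                    add_le_add_right hts _
                _ = ((omega0 : Ordinal.{0}) ^ n * m + r) ♯ ((omega0 : Ordinal.{0}) ^ n * k + s') :=
                    heq.symm
                _ < _ := nadd_lt_nadd_left (add_lt_add_right hs' _) _
    exact inner (r ♯ s) r s hr hs le_rfl

/-- `ω^n` is closed under natural addition. -/
lemma nadd_lt_pow (n : ℕ) : ∀ a b : Ordinal.{0}, a < (omega0 : Ordinal.{0}) ^ n →
    b < (omega0 : Ordinal.{0}) ^ n → a ♯ b < (omega0 : Ordinal.{0}) ^ n := by
  induction n with
  | zero =>
    intro a b ha hb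
    rw [pow_zero] at *
    rw [Ordinal.lt_one_iff_zero] at ha hb
    subst ha; subst hb
    simp [Ordinal.lt_one_iff_zero]
  | succ n ih =>
    intro a b ha hb
    have hpow : (0 : Ordinal.{0}) < (omega0 : Ordinal.{0}) ^ n := pos_iff_ne_zero.mpr (pow_ne_zero n omega0_ne_zero)
    have hdec : ∀ x : Ordinal.{0}, x < (omega0 : Ordinal.{0}) ^ (n + 1) →
        ∃ (m : ℕ) (r : Ordinal.{0}), r < (omega0 : Ordinal.{0}) ^ n ∧
          x = (omega0 : Ordinal.{0}) ^ n * m + r := by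
      intro x hx
      have hq : x / (omega0 : Ordinal.{0}) ^ n < omega0 := by
        rw [Ordinal.div_lt (pow_ne_zero' n)]
        rw [pow_succ] at hx
        exact hx
      obtain ⟨m, hm⟩ := lt_omega0.mp hq
      refine ⟨m, x % (omega0 : Ordinal.{0}) ^ n, Ordinal.mod_lt x (pow_ne_zero' n), ?_⟩
      rw [← hm]
      exact (Ordinal.div_add_mod x _).symm
    obtain ⟨ma, ra, hra, rfl⟩ := hdec a ha
    obtain ⟨mb, rb, hrb, rfl⟩ := hdec b hb
    rw [key_aux n ih (ma + mb) ma mb ra rb le_rfl hra hrb]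
    calc (omega0 : Ordinal.{0}) ^ n * ((ma + mb : ℕ) : Ordinal.{0}) + (ra ♯ rb)
        < (omega0 : Ordinal.{0}) ^ n * ((ma + mb : ℕ) : Ordinal.{0}) + (omega0 : Ordinal.{0}) ^ n :=
          add_lt_add_right (ih ra rb hra hrb) _
      _ = (omega0 : Ordinal.{0}) ^ n * ((ma + mb + 1 : ℕ) : Ordinal.{0}) := mul_natSucc _ _
      _ < (omega0 : Ordinal.{0}) ^ n * omega0 :=
          mul_lt_mul_of_pos_left (nat_lt_omega0 _) hpow
      _ = (omega0 : Ordinal.{0}) ^ (n + 1) := (pow_succ _ _).symm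

/-- `ω^n·m ♯ ω^n·k = ω^n·(m+k)` for natural coefficients. -/
lemma natCoeff (n m k : ℕ) :
    (omega0 : Ordinal.{0}) ^ n * (m : Ordinal.{0}) ♯ (omega0 : Ordinal.{0}) ^ n * (k : Ordinal.{0}) =
      (omega0 : Ordinal.{0}) ^ n * ((m + k : ℕ) : Ordinal.{0}) := by
  have := key_aux n (nadd_lt_pow n) (m + k) m k 0 0 le_rfl
    (pos_iff_ne_zero.mpr (pow_ne_zero n omega0_ne_zero)) (pos_iff_ne_zero.mpr (pow_ne_zero n omega0_ne_zero))
  simpa using this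

lemma nadd_self_pow (n : ℕ) :
    (omega0 : Ordinal.{0}) ^ n ♯ (omega0 : Ordinal.{0}) ^ n = (omega0 : Ordinal.{0}) ^ n * 2 := by
  have h := natCoeff n 1 1
  have h1 : ((1 : ℕ) : Ordinal.{0}) = 1 := by norm_num
  have h2 : ((1 + 1 : ℕ) : Ordinal.{0}) = 2 := by norm_num
  rw [h1, mul_one, h2] at h
  exact h

lemma pad_le (u : List ℕ) (i : ℕ) : pad u i ≤ omega0 := by
  unfold pad
  split
  · exact (nat_lt_omega0 _).le
  · exact le_rfl

lemma two_mul_pad_le (u : List ℕ) (i : ℕ) : 2 * pad u i ≤ omega0 := by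
  unfold pad
  split
  · rename_i hx
    have h1 : ((2 * u.get ⟨i, hx⟩ : ℕ) : Ordinal.{0}) ≤ omega0 := (nat_lt_omega0 _).le
    exact_mod_cast h1
  · rw [show (2 : Ordinal.{0}) = ((2 : ℕ) : Ordinal.{0}) by norm_num,
      natCast_mul_omega0 (by norm_num)]

lemma gammaFrom_succ (p j : ℕ) (w : List ℕ) (h : j < p) :
    gammaFrom p j w =
      (omega0 : Ordinal.{0}) ^ (p - 1 - j) * (2 * pad w j) ♯ gammaFrom p (j + 1) w := by
  unfold gammaFrom
  have hpj : p - j = (p - (j + 1)) + 1 := by omega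
  rw [hpj, List.range_succ_eq_map, List.map_cons, List.foldr_cons, List.map_map]
  congr 1
  congr 1
  apply List.map_congr_left
  intro k _
  simp only [Function.comp_apply, Nat.succ_eq_add_one]
  rw [show j + (k + 1) = j + 1 + k by omega]

lemma gamma_bound (p : ℕ) (w : List ℕ) :
    ∀ (d j : ℕ), p - j = d → gammaFrom p j w < (omega0 : Ordinal.{0}) ^ d * 2 := by
  intro d
  induction d with
  | zero =>
    intro j hj
    have : gammaFrom p j w = 0 := by
      unfold gammaFrom
      rw [hj]
      simp
    rw [this, pow_zero, one_mul]
    norm_num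
  | succ d ihd =>
    intro j hj
    have hjp : j < p := by omega
    rw [gammaFrom_succ p j w hjp]
    have he : p - 1 - j = d := by omega
    have ht1 : (omega0 : Ordinal.{0}) ^ (p - 1 - j) * (2 * pad w j) ≤ (omega0 : Ordinal.{0}) ^ (d + 1) := by
      rw [he]
      calc (omega0 : Ordinal.{0}) ^ d * (2 * pad w j) ≤ (omega0 : Ordinal.{0}) ^ d * omega0 :=
            mul_le_mul_right (two_mul_pad_le w j) _
        _ = (omega0 : Ordinal.{0}) ^ (d + 1) := (pow_succ _ _).symm
    have ht2 : gammaFrom p (j + 1) w < (omega0 : Ordinal.{0}) ^ (d + 1) := by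
      refine lt_of_lt_of_le (ihd (j + 1) (by omega)) ?_
      calc (omega0 : Ordinal.{0}) ^ d * 2 ≤ (omega0 : Ordinal.{0}) ^ d * omega0 := by
            refine mul_le_mul_right ?_ _
            rw [show (2 : Ordinal.{0}) = ((2 : ℕ) : Ordinal.{0}) by norm_num]
            exact (nat_lt_omega0 2).le
        _ = (omega0 : Ordinal.{0}) ^ (d + 1) := (pow_succ _ _).symm
    calc _ < (omega0 : Ordinal.{0}) ^ (d + 1) ♯ (omega0 : Ordinal.{0}) ^ (d + 1) :=
          nadd_lt_nadd_of_le_of_lt ht1 ht2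
      _ = (omega0 : Ordinal.{0}) ^ (d + 1) * 2 := nadd_self_pow (d + 1)

lemma gamma_core (p j : ℕ) (u v : List ℕ) (hj : j < p) (hlt : pad v j < pad u j) :
    gammaFrom p j v < gammaFrom p j u := by
  obtain ⟨nn, hn⟩ := lt_omega0.mp (hlt.trans_le (pad_le u j))
  set e := p - 1 - j with he_def
  have hR : gammaFrom p (j + 1) v < (omega0 : Ordinal.{0}) ^ e * ((2 : ℕ) : Ordinal.{0}) := by
    have h0 := gamma_bound p v (p - (j + 1)) (j + 1) rfl
    rw [show p - (j + 1) = e by omega] at h0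
    rwa [show ((2 : ℕ) : Ordinal.{0}) = 2 by norm_num]
  rw [gammaFrom_succ p j v hj, gammaFrom_succ p j u hj]
  have hterm_v : (omega0 : Ordinal.{0}) ^ e * (2 * pad v j) =
      (omega0 : Ordinal.{0}) ^ e * ((2 * nn : ℕ) : Ordinal.{0}) := by
    rw [hn]; congr 1; norm_cast
  have hu : ((nn + 1 : ℕ) : Ordinal.{0}) ≤ pad u j := by
    have h1 : ((nn : ℕ) : Ordinal.{0}) < pad u j := hn ▸ hlt
    push_cast
    rw [Ordinal.add_one_eq_succ]
    exact Order.succ_le_of_lt h1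
  calc (omega0 : Ordinal.{0}) ^ e * (2 * pad v j) ♯ gammaFrom p (j + 1) v
      < (omega0 : Ordinal.{0}) ^ e * ((2 * nn : ℕ) : Ordinal.{0}) ♯
          (omega0 : Ordinal.{0}) ^ e * ((2 : ℕ) : Ordinal.{0}) := by
        rw [hterm_v]
        exact nadd_lt_nadd_left hR _
    _ = (omega0 : Ordinal.{0}) ^ e * ((2 * nn + 2 : ℕ) : Ordinal.{0}) := natCoeff e (2 * nn) 2
    _ ≤ (omega0 : Ordinal.{0}) ^ e * (2 * pad u j) := by
        refine mul_le_mul_right ?_ _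
        calc ((2 * nn + 2 : ℕ) : Ordinal.{0}) = 2 * ((nn + 1 : ℕ) : Ordinal.{0}) := by
              push_cast; rw [mul_add, mul_one]
          _ ≤ 2 * pad u j := mul_le_mul_right hu _
    _ ≤ _ := le_self_nadd

end StmtAux

/-- If `u` is above `v` (padded lexicographic comparison), then `γ_p(u) > γ_p(v)`. -/
theorem stmt_3 (p : ℕ) (u v : List ℕ) (hu : u.length < p) (hv : v.length < p)
    (h : Above p u v) : gammaP p v < gammaP p u := by
  obtain ⟨j, hj, hpre, hlt⟩ := h
  have prop : ∀ d i, i + d = j → gammaFrom p i v < gammaFrom p i u := by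
    intro d
    induction d with
    | zero =>
      intro i hi
      have : i = j := by omega
      subst this
      exact StmtAux.gamma_core p i u v hj hlt
    | succ d ihd =>
      intro i hi
      have hij : i < j := by omega
      have hip : i < p := by omega
      rw [StmtAux.gammaFrom_succ p i u hip, StmtAux.gammaFrom_succ p i v hip, hpre i hij]
      exact nadd_lt_nadd_left (ihd (i + 1) (by omega)) _
  exact prop j 0 (by omega)
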